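/- Let (R, 𝔪) be a commutative local ring with unity which is zero dimensional (every prime ideal of R is maximal) and has finite residue field R/𝔪. Then the following are equivalent: (i) there exists a polynomial f ∈ R[X] such that the image f(R) is finite and the reduction of f modulo 𝔪 induces a non-constant function on R/𝔪 (equivalently, there exist a, b ∈ R with f(a) − f(b) ∉ 𝔪); (ii) R admits a nontrivial polynomial characteristic function, i.e., there exist a nonempty proper subset S ⊆ R and g ∈ R[X] with g(r) = 1 for r ∈ S and g(r) = 0 for r ∉ S. -/

import Mathlib

/-- **Proposition 2.6 (equivalence).** Let `(R, 𝔪)` be a zero dimensional commutative local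
ring with finite residue field. Then the following are equivalent: (i) there is a polynomial
`f ∈ R[X]` with `f(R)` finite inducing a non-constant function on `R/𝔪`; (ii) `R` admits a
nontrivial polynomial characteristic function. -/
theorem stmt_11 {R : Type*} [CommRing R] [IsLocalRing R]
    (hdim : ∀ P : Ideal R, P.IsPrime → P.IsMaximal)
    (hres : Finite (IsLocalRing.ResidueField R)) :
    (∃ f : Polynomial R, (Set.range fun r => f.eval r).Finite ∧
      ∃ a b : R, f.eval a - f.eval b ∉ IsLocalRing.maximalIdeal R) ↔
    (∃ (S : Set R) (g : Polynomial R), S.Nonempty ∧ S ≠ Set.univ ∧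
      (∀ r ∈ S, g.eval r = 1) ∧ (∀ r ∉ S, g.eval r = 0)) := by
  classical
  set m := IsLocalRing.maximalIdeal R with hm
  constructor
  · rintro ⟨f, hfin, a, b, hab⟩
    set c := f.eval a with hc
    set V : Finset R := hfin.toFinset with hV
    have hmemV : ∀ x : R, f.eval x ∈ V := fun x => hfin.mem_toFinset.mpr ⟨x, rfl⟩
    set U : Finset R := V.filter (fun v => v - c ∉ m) with hU
    set T : Finset R := V.filter (fun v => v - c ∈ m) with hT
    set e : R → R := fun w => ∏ v ∈ U, (w - v) with he
    have hunit : ∀ w : R, w - c ∈ m → IsUnit (e w) := by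
      intro w hw
      refine Finset.prod_induction _ IsUnit (fun _ _ => IsUnit.mul) isUnit_one ?_
      intro v hv
      have hv' : v - c ∉ m := (Finset.mem_filter.mp hv).2
      rw [← IsLocalRing.notMem_maximalIdeal, ← hm]
      intro hwv
      exact hv' (by have := m.sub_mem hw hwv; simpa using this)
    refine ⟨{x | f.eval x - c ∈ m},
      1 - ∏ w ∈ T, (1 - Polynomial.C (Ring.inverse (e w)) * ∏ v ∈ U, (f - Polynomial.C v)),
      ⟨a, by simp [hc]⟩, ?_, ?_, ?_⟩
    · intro hS
      have hb : f.eval b - c ∈ m := by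
        have := hS.symm ▸ Set.mem_univ b
        exact this
      exact hab (by have := m.neg_mem hb; simpa using this)
    · intro x hx
      have hx : f.eval x - c ∈ m := hx
      have hxT : f.eval x ∈ T := Finset.mem_filter.mpr ⟨hmemV x, hx⟩
      have hz : (∏ w ∈ T, (1 - Polynomial.C (Ring.inverse (e w)) *
          ∏ v ∈ U, (f - Polynomial.C v))).eval x = 0 := by
        rw [Polynomial.eval_prod]
        apply Finset.prod_eq_zero hxT
        simp only [Polynomial.eval_sub, Polynomial.eval_one, Polynomial.eval_mul,
          Polynomial.eval_C, Polynomial.eval_prod]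
        have : (∏ v ∈ U, (f.eval x - v)) = e (f.eval x) := rfl
        rw [this, Ring.inverse_mul_cancel _ (hunit _ hx), sub_self]
      simp [hz]
    · intro x hx
      have hx : f.eval x - c ∉ m := hx
      have hxU : f.eval x ∈ U := Finset.mem_filter.mpr ⟨hmemV x, hx⟩
      have hz : (∏ v ∈ U, (f.eval x - v)) = 0 :=
        Finset.prod_eq_zero hxU (by simp)
      simp [Polynomial.eval_prod, hz]
  · rintro ⟨S, g, ⟨s, hs⟩, hSne, h1, h0⟩
    obtain ⟨t, ht⟩ : ∃ t, t ∉ S := by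
      by_contra h
      push_neg at h
      exact hSne (Set.eq_univ_of_forall h)
    refine ⟨g, ?_, s, t, ?_⟩
    · apply Set.Finite.subset (Set.toFinite ({0, 1} : Set R))
      rintro y ⟨x, rfl⟩
      by_cases hx : x ∈ S
      · simp [h1 x hx]
      · simp [h0 x hx]
    · rw [h1 s hs, h0 t ht, sub_zero]
      intro h1m
      exact (IsLocalRing.maximalIdeal.isMaximal R).ne_top (Ideal.eq_top_of_isUnit_mem _ h1m isUnit_one)
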